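/- Let P, h_1, …, h_N be N'×N' complex matrices such that the h_j pairwise commute ([h_i, h_j] = 0 for all i, j) and such that each h_j either commutes with P (h_j P = P h_j) or anticommutes with P (h_j P = −P h_j). Let H = Σ_{j=1}^N h_j, let C = { j : h_j P + P h_j = 0 } be the set of indices whose term anticommutes with P, and let H̃ = Σ_{j ∈ C} h_j. Then (i) for every integer p ≥ 1, ad_H^p(P) = ad_{H̃}^p(P); and (ii) if in addition ‖h_j‖ ≤ 1 for all j and ‖P‖ ≤ 1, then ‖ad_H^p(P)‖ ≤ (2·|C|)^p, where |C| is the number of elements of C. -/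

import Mathlib

open scoped Matrix.Norms.L2Operator

/-- The `p`-fold nested commutator `ad_H^p(A) = [H, [H, …, [H, A]…]]`. -/
noncomputable def adPow {N' : ℕ} (H : Matrix (Fin N') (Fin N') ℂ) :
    ℕ → Matrix (Fin N') (Fin N') ℂ → Matrix (Fin N') (Fin N') ℂ
  | 0, A => A
  | p + 1, A => H * adPow H p A - adPow H p A * H

/-- Let `P, h_1, …, h_N` be square complex matrices with the `h_j`
pairwise commuting and each `h_j` either commuting or anticommuting with `P`.  With
`H = Σ_j h_j`, `C` the set of indices whose term anticommutes with `P`, and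
`H̃ = Σ_{j ∈ C} h_j`, one has (i) `ad_H^p(P) = ad_{H̃}^p(P)` for all `p ≥ 1`; and
(ii) if moreover `‖h_j‖ ≤ 1` for all `j` and `‖P‖ ≤ 1`, then
`‖ad_H^p(P)‖ ≤ (2·|C|)^p`. -/
theorem stmt6 {N' N : ℕ} (P : Matrix (Fin N') (Fin N') ℂ)
    (h : Fin N → Matrix (Fin N') (Fin N') ℂ)
    (hcomm : ∀ i j, h i * h j = h j * h i)
    (hPcomm : ∀ j, h j * P = P * h j ∨ h j * P = -(P * h j))
    (C : Finset (Fin N)) (hC : ∀ j, j ∈ C ↔ h j * P + P * h j = 0) :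
    (∀ p : ℕ, 1 ≤ p →
        adPow (∑ j, h j) p P = adPow (∑ j ∈ C, h j) p P) ∧
    ((∀ j, ‖h j‖ ≤ 1) → ‖P‖ ≤ 1 → ∀ p : ℕ, 1 ≤ p →
        ‖adPow (∑ j, h j) p P‖ ≤ (2 * (C.card : ℝ)) ^ p) := by
  set Ht := ∑ j ∈ C, h j with hHt
  set D := ∑ j ∈ Cᶜ, h j with hD
  have hsplit : (∑ j, h j) = Ht + D := (Finset.sum_add_sum_compl C h).symm
  -- D commutes with P
  have hDP : D * P = P * D := by
    rw [hD, Finset.sum_mul, Finset.mul_sum]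
    refine Finset.sum_congr rfl fun j hj => ?_
    rcases hPcomm j with hc | ha
    · exact hc
    · exfalso
      have : j ∈ C := (hC j).mpr (by rw [ha, neg_add_cancel])
      exact (Finset.mem_compl.mp hj) this
  -- D commutes with Ht
  have hDHt : D * Ht = Ht * D := by
    rw [hD, hHt, Finset.sum_mul, Finset.mul_sum]
    refine Finset.sum_congr rfl fun j hj => ?_
    rw [Finset.sum_mul, Finset.mul_sum]
    exact Finset.sum_congr rfl fun i hi => hcomm j i
  -- D commutes with adPow Ht p P
  have hDA : ∀ p, D * adPow Ht p P = adPow Ht p P * D := by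
    intro p
    induction p with
    | zero => exact hDP
    | succ p ih =>
      show D * (Ht * adPow Ht p P - adPow Ht p P * Ht)
          = (Ht * adPow Ht p P - adPow Ht p P * Ht) * D
      set A := adPow Ht p P
      have e1 : D * (Ht * A) = (Ht * A) * D := by
        rw [← mul_assoc, hDHt, mul_assoc, ih, ← mul_assoc]
      have e2 : D * (A * Ht) = (A * Ht) * D := by
        rw [← mul_assoc, ih, mul_assoc, hDHt, ← mul_assoc]
      rw [mul_sub, sub_mul, e1, e2]
  -- part (i), for all p
  have key : ∀ p, adPow (Ht + D) p P = adPow Ht p P := by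
    intro p
    induction p with
    | zero => rfl
    | succ p ih =>
      show (Ht + D) * adPow (Ht + D) p P - adPow (Ht + D) p P * (Ht + D)
          = Ht * adPow Ht p P - adPow Ht p P * Ht
      rw [ih]
      set A := adPow Ht p P
      rw [add_mul, mul_add, hDA p]
      abel
  refine ⟨fun p _ => by rw [hsplit, key], fun hn hP => ?_⟩
  have hHtn : ‖Ht‖ ≤ (C.card : ℝ) := by
    calc ‖Ht‖ ≤ ∑ j ∈ C, ‖h j‖ := norm_sum_le _ _
    _ ≤ ∑ _j ∈ C, (1 : ℝ) := Finset.sum_le_sum fun j _ => hn j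
    _ = (C.card : ℝ) := by simp
  have hcard : (0:ℝ) ≤ (C.card : ℝ) := Nat.cast_nonneg _
  have bound : ∀ q, ‖adPow Ht q P‖ ≤ (2 * (C.card : ℝ)) ^ q := by
    intro q
    induction q with
    | zero => simpa [adPow] using hP
    | succ p ih =>
      show ‖Ht * adPow Ht p P - adPow Ht p P * Ht‖ ≤ (2 * (C.card : ℝ)) ^ (p + 1)
      set A := adPow Ht p P
      have hA0 : (0:ℝ) ≤ ‖A‖ := norm_nonneg _
      have h1 : ‖Ht * A - A * Ht‖ ≤ ‖Ht‖ * ‖A‖ + ‖A‖ * ‖Ht‖ :=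
        le_trans (norm_sub_le _ _) (add_le_add (norm_mul_le _ _) (norm_mul_le _ _))
      have h2 : ‖Ht‖ * ‖A‖ + ‖A‖ * ‖Ht‖ ≤ 2 * (C.card : ℝ) * ‖A‖ := by
        nlinarith [norm_nonneg Ht]
      have hp0 : (0:ℝ) ≤ (2 * (C.card : ℝ)) ^ p := by positivity
      calc ‖Ht * A - A * Ht‖ ≤ 2 * (C.card : ℝ) * ‖A‖ := le_trans h1 h2
      _ ≤ 2 * (C.card : ℝ) * (2 * (C.card : ℝ)) ^ p := by nlinarith
      _ = (2 * (C.card : ℝ)) ^ (p + 1) := by rw [pow_succ]; ring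
  intro p _
  rw [hsplit, key]
  exact bound p
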